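/- Two outcome profiles x, y ∈ ℝ^t have equal CPT value under every probability distribution, i.e., V^r(p,x) = V^r(p,y) for all probability vectors p = (p_1,…,p_t), if and only if x = y. -/
import Mathlib


/-- The decision-weight form of the CPT value of the prospect `(p, z)` with
reference point `r`, value function `v`, probability weighting functions
`wp` (for gains) and `wm` (for losses), computed using a permutation `a`
of the indices ordering `z` decreasingly.  (The value does not depend on the
choice of such a permutation.) -/
noncomputable def cptVal {t : ℕ} (wp wm v : ℝ → ℝ) (r : ℝ) (p z : Fin t → ℝ)
    (a : Equiv.Perm (Fin t)) : ℝ :=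
  ∑ j : Fin t,
    (if r ≤ z (a j) then
        wp (∑ k ∈ Finset.Iic j, p (a k)) - wp (∑ k ∈ Finset.Iio j, p (a k))
      else
        wm (∑ k ∈ Finset.Ici j, p (a k)) - wm (∑ k ∈ Finset.Ioi j, p (a k)))
      * v (z (a j))

/-- `p` is a probability vector. -/
def IsProbVec {t : ℕ} (p : Fin t → ℝ) : Prop :=
  (∀ j, 0 ≤ p j) ∧ ∑ j, p j = 1

lemma abel_aux (D G : ℕ → ℝ) (t : ℕ) :
    ∑ n ∈ Finset.range t, (D (n+1) - D n) * G n
      = (∑ n ∈ Finset.range t, D n * (G (n-1) - G n)) + D t * G (t-1) - D 0 * G 0 := by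
  induction t with
  | zero => simp
  | succ t ih =>
    rw [Finset.sum_range_succ, Finset.sum_range_succ, ih, Nat.succ_sub_one]
    ring

lemma abel_zero (D G : ℕ → ℝ) (t : ℕ) (h0 : D 0 = 0) (ht : D t = 0)
    (h : ∀ n, 0 < n → n < t → D n * (G (n-1) - G n) = 0) :
    ∑ n ∈ Finset.range t, (D (n+1) - D n) * G n = 0 := by
  rw [abel_aux, ht, h0]
  simp only [zero_mul, sub_zero, add_zero]
  apply Finset.sum_eq_zero
  intro n hn
  rcases Nat.eq_zero_or_pos n with h' | h'
  · subst h'; simp [h0]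
  · exact h n h' (Finset.mem_range.mp hn)

/-- prefix sums of a probability-like vector along a permutation -/
noncomputable def qpre {t : ℕ} (p : Fin t → ℝ) (σ : Equiv.Perm (Fin t)) (n : ℕ) : ℝ :=
  ∑ k ∈ Finset.univ.filter (fun k : Fin t => (k : ℕ) < n), p (σ k)

/-- the `n`-th sorted value -/
noncomputable def wval {t : ℕ} (z : Fin t → ℝ) (σ : Equiv.Perm (Fin t)) (n : ℕ) : ℝ :=
  if h : n < t then z (σ ⟨n, h⟩) else 0

lemma qpre_zero {t : ℕ} (p : Fin t → ℝ) (σ : Equiv.Perm (Fin t)) : qpre p σ 0 = 0 := by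
  simp [qpre]

lemma qpre_top {t : ℕ} (p : Fin t → ℝ) (σ : Equiv.Perm (Fin t)) : qpre p σ t = ∑ i, p i := by
  unfold qpre
  rw [Finset.filter_true_of_mem (fun k _ => k.isLt), Equiv.sum_comp σ p]

lemma wval_lt {t : ℕ} (z : Fin t → ℝ) (σ : Equiv.Perm (Fin t)) (j : Fin t) :
    wval z σ (j : ℕ) = z (σ j) := by
  unfold wval
  rw [dif_pos j.isLt]

lemma prefix_sum_eq_level {t : ℕ} (p z : Fin t → ℝ) (σ : Equiv.Perm (Fin t))
    (hσ : Antitone (fun j => z (σ j))) (j1 j2 : Fin t) (hj : (j2 : ℕ) = (j1 : ℕ) + 1)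
    (hdrop : z (σ j2) < z (σ j1)) :
    qpre p σ (j2 : ℕ) = ∑ i ∈ Finset.univ.filter (fun i => z (σ j1) ≤ z i), p i := by
  unfold qpre
  apply Finset.sum_equiv σ
  · intro k
    simp only [Finset.mem_filter, Finset.mem_univ, true_and, hj]
    constructor
    · intro hk
      exact hσ (show k ≤ j1 from Fin.le_def.mpr (Nat.lt_succ_iff.mp hk))
    · intro hk
      by_contra hc
      have h2 : j2 ≤ k := Fin.le_def.mpr (by omega)
      exact absurd (le_trans hk (hσ h2)) (not_le.mpr hdrop)
  · intro k _; rfl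

lemma qpre_eq_of_drop {t : ℕ} (p z : Fin t → ℝ) (a b : Equiv.Perm (Fin t))
    (ha : Antitone (fun j => z (a j))) (hb : Antitone (fun j => z (b j)))
    (hzz : ∀ j, z (a j) = z (b j)) (n : ℕ) (hn0 : 0 < n) (hnt : n < t)
    (hne : wval z a (n - 1) ≠ wval z a n) :
    qpre p a n = qpre p b n := by
  have hnt' : n - 1 < t := lt_trans (Nat.sub_lt hn0 one_pos) hnt
  set j1 : Fin t := ⟨n - 1, hnt'⟩ with hj1
  set j2 : Fin t := ⟨n, hnt⟩ with hj2
  have hj : (j2 : ℕ) = (j1 : ℕ) + 1 := by show n = n - 1 + 1; omega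
  have hw1 : wval z a (n - 1) = z (a j1) := by unfold wval; rw [dif_pos hnt']
  have hw2 : wval z a n = z (a j2) := by unfold wval; rw [dif_pos hnt]
  have hle : z (a j2) ≤ z (a j1) := ha (Fin.le_def.mpr (show n - 1 ≤ n from Nat.sub_le n 1))
  have hdropa : z (a j2) < z (a j1) := by
    rcases lt_or_eq_of_le hle with h | h
    · exact h
    · exact absurd (by rw [hw1, hw2, h]) hne
  have hdropb : z (b j2) < z (b j1) := by rw [← hzz j1, ← hzz j2]; exact hdropa
  have hqa := prefix_sum_eq_level p z a ha j1 j2 hj hdropa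
  have hqb := prefix_sum_eq_level p z b hb j1 j2 hj hdropb
  have hn2 : (j2 : ℕ) = n := rfl
  rw [← hn2, hqa, hqb, hzz j1]

lemma cptVal_eq_range {t : ℕ} (wp wm v : ℝ → ℝ) (r : ℝ) (p z : Fin t → ℝ)
    (σ : Equiv.Perm (Fin t)) :
    cptVal wp wm v r p z σ
      = ∑ n ∈ Finset.range t,
          ((wp (qpre p σ (n + 1)) - wp (qpre p σ n))
              * (if r ≤ wval z σ n then v (wval z σ n) else 0)
            + (wm ((∑ i, p i) - qpre p σ n) - wm ((∑ i, p i) - qpre p σ (n + 1)))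
              * (if r ≤ wval z σ n then 0 else v (wval z σ n))) := by
  rw [← Fin.sum_univ_eq_sum_range (fun n =>
          ((wp (qpre p σ (n + 1)) - wp (qpre p σ n))
              * (if r ≤ wval z σ n then v (wval z σ n) else 0)
            + (wm ((∑ i, p i) - qpre p σ n) - wm ((∑ i, p i) - qpre p σ (n + 1)))
              * (if r ≤ wval z σ n then 0 else v (wval z σ n)))) t]
  rw [cptVal]
  apply Finset.sum_congr rfl
  intro j _
  have hwj : wval z σ (j : ℕ) = z (σ j) := wval_lt z σ j
  have hIio : ∑ k ∈ Finset.Iio j, p (σ k) = qpre p σ (j : ℕ) := by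
    unfold qpre
    apply Finset.sum_congr _ (fun _ _ => rfl)
    ext k
    simp only [Finset.mem_Iio, Finset.mem_filter, Finset.mem_univ, true_and]
    exact Fin.lt_def
  have hIic : ∑ k ∈ Finset.Iic j, p (σ k) = qpre p σ ((j : ℕ) + 1) := by
    unfold qpre
    apply Finset.sum_congr _ (fun _ _ => rfl)
    ext k
    simp only [Finset.mem_Iic, Finset.mem_filter, Finset.mem_univ, true_and, Nat.lt_succ_iff]
    exact Fin.le_def
  have hU : ∑ k, p (σ k) = ∑ i, p i := Equiv.sum_comp σ p
  have hIci : ∑ k ∈ Finset.Ici j, p (σ k) = (∑ i, p i) - qpre p σ (j : ℕ) := by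
    have hcompl : Finset.Ici j = (Finset.Iio j)ᶜ := by ext k; simp
    have h2 := Finset.sum_add_sum_compl (Finset.Iio j) (fun k => p (σ k))
    rw [hIio] at h2
    rw [hcompl]
    have h3 : ∑ k ∈ (Finset.Iio j)ᶜ, p (σ k) = ∑ k ∈ (Finset.Iio j)ᶜ, (fun k => p (σ k)) k := rfl
    rw [h3]
    linarith [h2, hU]
  have hIoi : ∑ k ∈ Finset.Ioi j, p (σ k) = (∑ i, p i) - qpre p σ ((j : ℕ) + 1) := by
    have hcompl : Finset.Ioi j = (Finset.Iic j)ᶜ := by ext k; simp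
    have h2 := Finset.sum_add_sum_compl (Finset.Iic j) (fun k => p (σ k))
    rw [hIic] at h2
    rw [hcompl]
    have h3 : ∑ k ∈ (Finset.Iic j)ᶜ, p (σ k) = ∑ k ∈ (Finset.Iic j)ᶜ, (fun k => p (σ k)) k := rfl
    rw [h3]
    linarith [h2, hU]
  rw [hIio, hIic, hIci, hIoi, hwj]
  split <;> ring

lemma cptVal_indep {t : ℕ} (wp wm v : ℝ → ℝ) (r : ℝ) (p z : Fin t → ℝ)
    (a b : Equiv.Perm (Fin t))
    (ha : Antitone (fun j => z (a j))) (hb : Antitone (fun j => z (b j))) :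
    cptVal wp wm v r p z a = cptVal wp wm v r p z b := by
  classical
  have hzz : ∀ j, z (a j) = z (b j) := by
    have hma : Monotone ((fun i => -z i) ∘ a) := fun i j hij => neg_le_neg (ha hij)
    have hmb : Monotone ((fun i => -z i) ∘ b) := fun i j hij => neg_le_neg (hb hij)
    intro j
    have := congrFun (Tuple.unique_monotone hma hmb) j
    simpa using this
  have hwab : ∀ n, wval z b n = wval z a n := by
    intro n
    unfold wval
    split
    · rw [← hzz]
    · rfl
  rw [cptVal_eq_range, cptVal_eq_range, ← sub_eq_zero, ← Finset.sum_sub_distrib]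
  have hsplit : ∀ n ∈ Finset.range t,
      (((wp (qpre p a (n + 1)) - wp (qpre p a n))
              * (if r ≤ wval z a n then v (wval z a n) else 0)
            + (wm ((∑ i, p i) - qpre p a n) - wm ((∑ i, p i) - qpre p a (n + 1)))
              * (if r ≤ wval z a n then 0 else v (wval z a n)))
        - ((wp (qpre p b (n + 1)) - wp (qpre p b n))
              * (if r ≤ wval z b n then v (wval z b n) else 0)
            + (wm ((∑ i, p i) - qpre p b n) - wm ((∑ i, p i) - qpre p b (n + 1)))
              * (if r ≤ wval z b n then 0 else v (wval z b n))))
      = ((fun m => wp (qpre p a m) - wp (qpre p b m)) (n + 1)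
            - (fun m => wp (qpre p a m) - wp (qpre p b m)) n)
          * (fun m => if r ≤ wval z a m then v (wval z a m) else 0) n
        + ((fun m => -(wm ((∑ i, p i) - qpre p a m) - wm ((∑ i, p i) - qpre p b m))) (n + 1)
            - (fun m => -(wm ((∑ i, p i) - qpre p a m) - wm ((∑ i, p i) - qpre p b m))) n)
          * (fun m => if r ≤ wval z a m then 0 else v (wval z a m)) n := by
    intro n _
    simp only [hwab]
    ring
  rw [Finset.sum_congr rfl hsplit, Finset.sum_add_distrib]
  have hDz := abel_zero (fun m => wp (qpre p a m) - wp (qpre p b m))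
      (fun m => if r ≤ wval z a m then v (wval z a m) else 0) t
      (by simp [qpre_zero]) (by simp [qpre_top])
      (by
        intro n hn0 hnt
        by_cases hwe : wval z a (n - 1) = wval z a n
        · simp only [hwe]; ring
        · have hq := qpre_eq_of_drop p z a b ha hb hzz n hn0 hnt hwe
          simp [hq])
  have hEz := abel_zero (fun m => -(wm ((∑ i, p i) - qpre p a m) - wm ((∑ i, p i) - qpre p b m)))
      (fun m => if r ≤ wval z a m then 0 else v (wval z a m)) t
      (by simp [qpre_zero]) (by simp [qpre_top])
      (by
        intro n hn0 hnt
        by_cases hwe : wval z a (n - 1) = wval z a n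
        · simp only [hwe]; ring
        · have hq := qpre_eq_of_drop p z a b ha hb hzz n hn0 hnt hwe
          simp [hq])
  rw [hDz, hEz, add_zero]

lemma cptVal_dirac {t : ℕ} (wp wm v : ℝ → ℝ) (r : ℝ)
    (hwp0 : wp 0 = 0) (hwp1 : wp 1 = 1) (hwm0 : wm 0 = 0) (hwm1 : wm 1 = 1)
    (z : Fin t → ℝ) (a : Equiv.Perm (Fin t)) (i : Fin t) :
    cptVal wp wm v r (fun j => if j = i then 1 else 0) z a = v (z i) := by
  unfold cptVal
  have hps : ∀ s : Finset (Fin t), (∑ k ∈ s, if a k = i then (1:ℝ) else 0)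
      = if a.symm i ∈ s then 1 else 0 := by
    intro s
    simp [Equiv.apply_eq_iff_eq_symm_apply, Finset.sum_ite_eq']
  rw [Finset.sum_eq_single (a.symm i)]
  · rw [hps, hps, hps, hps]
    simp only [Finset.mem_Iic, Finset.mem_Iio, Finset.mem_Ici, Finset.mem_Ioi,
      le_refl, lt_irrefl, if_true, if_false, Equiv.apply_symm_apply, hwp0, hwp1, hwm0, hwm1]
    split <;> ring
  · intro j _ hj
    rw [hps, hps, hps, hps]
    have h1 : (a.symm i ≤ j) ↔ (a.symm i < j) :=
      ⟨fun h => h.lt_of_ne (fun e => hj e.symm), le_of_lt⟩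
    have h2 : (j ≤ a.symm i) ↔ (j < a.symm i) :=
      ⟨fun h => h.lt_of_ne hj, le_of_lt⟩
    simp only [Finset.mem_Iic, Finset.mem_Iio, Finset.mem_Ici, Finset.mem_Ioi, h1, h2]
    split <;> ring
  · intro h; exact absurd (Finset.mem_univ _) h


/-- two outcome profiles `x` and `y` have equal CPT value under every
probability distribution `p` (the CPT values being computed with any permutations
ordering `x`, resp. `y`, decreasingly) if and only if `x = y`. -/
theorem cpt_value_eq_forall_prob_iff_eq {t : ℕ} (wp wm v : ℝ → ℝ) (r : ℝ)
    (hwpc : ContinuousOn wp (Set.Icc 0 1)) (hwmc : ContinuousOn wm (Set.Icc 0 1))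
    (hwpm : StrictMonoOn wp (Set.Icc 0 1)) (hwmm : StrictMonoOn wm (Set.Icc 0 1))
    (hwp0 : wp 0 = 0) (hwp1 : wp 1 = 1) (hwm0 : wm 0 = 0) (hwm1 : wm 1 = 1)
    (hv : StrictMono v) (hvc : Continuous v) (hvr : v r = 0)
    (x y : Fin t → ℝ) :
    (∀ p : Fin t → ℝ, IsProbVec p →
      ∀ a b : Equiv.Perm (Fin t),
        Antitone (fun j => x (a j)) → Antitone (fun j => y (b j)) →
        cptVal wp wm v r p x a = cptVal wp wm v r p y b)
    ↔ x = y := by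
  constructor
  · intro h
    funext i
    apply hv.injective
    have hpv : IsProbVec (fun j : Fin t => if j = i then (1:ℝ) else 0) := by
      constructor
      · intro j; dsimp only; split <;> norm_num
      · simp
    have hax : Antitone (fun j => x ((Tuple.sort (fun k => -x k)) j)) := by
      intro i1 j1 hij
      have := Tuple.monotone_sort (fun k => -x k) hij
      simpa using this
    have hby : Antitone (fun j => y ((Tuple.sort (fun k => -y k)) j)) := by
      intro i1 j1 hij
      have := Tuple.monotone_sort (fun k => -y k) hij
      simpa using this
    have hkey := h _ hpv (Tuple.sort (fun k => -x k)) (Tuple.sort (fun k => -y k)) hax hby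
    rwa [cptVal_dirac wp wm v r hwp0 hwp1 hwm0 hwm1 x _ i,
      cptVal_dirac wp wm v r hwp0 hwp1 hwm0 hwm1 y _ i] at hkey
  · rintro rfl
    intro p _ a b ha hb
    exact cptVal_indep wp wm v r p x a b ha hb
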